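/- Let n ≥ 1 be an integer and define f_{V_n}(v) = sin( 2n · arcsin v )² / ( π n (1 − v²)^{3/2} ) for v ∈ (0,1). Then the expectation of the corresponding speed satisfies ∫_0^1 v · f_{V_n}(v) dv = (4/π) Σ_{h=1}^{n} ( 1/(4h−3) − 1/(4h−1) ). -/

import Mathlib

open Real

/-- The probability density `f_{V_n}(v) = sin(2n arcsin v)² / (πn (1−v²)^{3/2})` of the
time-of-flight speed `V_n` of the cursor prepared in the launch-pad state `|c_n⟩`. -/
noncomputable def launchpadSpeedDensity (n : ℕ) (v : ℝ) : ℝ :=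
  Real.sin (2 * n * Real.arcsin v) ^ 2 / (π * n * (1 - v ^ 2) ^ ((3 : ℝ) / 2))

private lemma sum_sin_key (m : ℕ) (θ : ℝ) :
    ∑ k ∈ Finset.range m, (-1:ℝ)^k * (2 * Real.cos θ * Real.sin ((2*k+1)*θ))
      = -(-1:ℝ)^m * Real.sin (2*m*θ) := by
  induction m with
  | zero => simp
  | succ m ih =>
    rw [Finset.sum_range_succ, ih]
    have h1 : (2*((m:ℝ)+1))*θ = (2*m+1)*θ + θ := by ring
    have h2 : (2*(m:ℝ))*θ = (2*m+1)*θ - θ := by ring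
    push_cast
    rw [h1, h2, Real.sin_add, Real.sin_sub]
    ring

private lemma sin_eq_cos_mul (n : ℕ) (θ : ℝ) :
    Real.sin (2*n*θ) = Real.cos θ *
      ((-1:ℝ)^(n+1) * 2 * ∑ k ∈ Finset.range n, (-1:ℝ)^k * Real.sin ((2*k+1)*θ)) := by
  have h := sum_sin_key n θ
  have hsum : ∑ k ∈ Finset.range n, (-1:ℝ)^k * (2 * Real.cos θ * Real.sin ((2*k+1)*θ))
      = 2 * Real.cos θ * ∑ k ∈ Finset.range n, (-1:ℝ)^k * Real.sin ((2*k+1)*θ) := by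
    rw [Finset.mul_sum]; exact Finset.sum_congr rfl fun k _ => by ring
  rw [hsum] at h
  have hsq : ((-1:ℝ)^n)^2 = 1 := by rw [← pow_mul, mul_comm, pow_mul]; norm_num
  have h2 : (-1:ℝ)^(n+1) * (-(-1:ℝ)^n) = 1 := by rw [pow_succ]; nlinarith [hsq]
  calc Real.sin (2*n*θ) = ((-1:ℝ)^(n+1) * (-(-1:ℝ)^n)) * Real.sin (2*n*θ) := by rw [h2]; ring
    _ = (-1:ℝ)^(n+1) * (-(-1:ℝ)^n * Real.sin (2*n*θ)) := by ring
    _ = (-1:ℝ)^(n+1) * (2 * Real.cos θ * ∑ k ∈ Finset.range n, (-1:ℝ)^k * Real.sin ((2*k+1)*θ)) := by rw [← h]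
    _ = _ := by ring

private lemma abs_sin_le_cos (n : ℕ) (θ : ℝ) (hc : 0 ≤ Real.cos θ) :
    Real.sin (2*n*θ)^2 ≤ (2*n)^2 * Real.cos θ^2 := by
  have h := sin_eq_cos_mul n θ
  have habs : |Real.sin (2*n*θ)| ≤ 2*n * Real.cos θ := by
    rw [h, abs_mul, abs_of_nonneg hc]
    have : |(-1:ℝ)^(n+1) * 2 * ∑ k ∈ Finset.range n, (-1:ℝ)^k * Real.sin ((2*k+1)*θ)| ≤ 2*n := by
      rw [abs_mul, abs_mul, abs_pow, abs_neg, abs_one, one_pow, one_mul, abs_two]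
      have : |∑ k ∈ Finset.range n, (-1:ℝ)^k * Real.sin ((2*k+1)*θ)| ≤ n := by
        calc |∑ k ∈ Finset.range n, (-1:ℝ)^k * Real.sin ((2*k+1)*θ)|
            ≤ ∑ k ∈ Finset.range n, |(-1:ℝ)^k * Real.sin ((2*k+1)*θ)| := Finset.abs_sum_le_sum_abs _ _
          _ ≤ ∑ k ∈ Finset.range n, 1 := Finset.sum_le_sum fun k _ => by
              rw [abs_mul, abs_pow, abs_neg, abs_one, one_pow, one_mul]
              exact abs_le.mpr ⟨Real.neg_one_le_sin _, Real.sin_le_one _⟩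
          _ = n := by simp
      linarith
    calc Real.cos θ * |_ * 2 * _| ≤ Real.cos θ * (2*n) := by
          exact mul_le_mul_of_nonneg_left this hc
      _ = 2*n * Real.cos θ := by ring
  calc Real.sin (2*n*θ)^2 = |Real.sin (2*n*θ)|^2 := (sq_abs _).symm
    _ ≤ (2*n * Real.cos θ)^2 := by
        apply sq_le_sq' <;> [linarith [abs_nonneg (Real.sin (2*n*θ))]; exact habs]
    _ = (2*n)^2 * Real.cos θ^2 := by ring

private lemma sum_reindex (n : ℕ) :
    ∑ k ∈ Finset.range (2*n), (-1:ℝ)^k / (2*k+1)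
      = ∑ h ∈ Finset.Icc 1 n, (1 / (4 * (h : ℝ) - 3) - 1 / (4 * (h : ℝ) - 1)) := by
  induction n with
  | zero => simp
  | succ n ih =>
    have : 2*(n+1) = (2*n) + 1 + 1 := by ring
    rw [this, Finset.sum_range_succ, Finset.sum_range_succ, ih,
      Finset.sum_Icc_succ_top (by omega : 1 ≤ n+1)]
    push_cast
    rw [pow_succ, pow_mul]
    norm_num
    ring

private lemma rpow_three_halves {x : ℝ} (hx : 0 ≤ x) :
    x ^ ((3:ℝ)/2) = (Real.sqrt x)^3 := by
  rw [Real.sqrt_eq_rpow, ← Real.rpow_natCast (x ^ ((1:ℝ)/2)) 3, ← Real.rpow_mul hx]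
  norm_num

/-- auxiliary antiderivative -/
noncomputable def auxF (n : ℕ) (v : ℝ) : ℝ :=
  Real.sin (2*n*Real.arcsin v) *
    ((-1:ℝ)^(n+1) * 2 * ∑ k ∈ Finset.range n, (-1:ℝ)^k * Real.sin ((2*k+1)*Real.arcsin v))
  - 4*n * ∑ k ∈ Finset.range (2*n), (-1:ℝ)^k * Real.cos ((2*k+1)*Real.arcsin v) / (2*k+1)

private lemma auxF_continuous (n : ℕ) : Continuous (auxF n) := by
  unfold auxF
  have harc : Continuous Real.arcsin := Real.continuous_arcsin
  apply Continuous.sub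
  · exact (Real.continuous_sin.comp ((continuous_const.mul harc))).mul
      (continuous_const.mul (continuous_finset_sum _ fun k _ =>
        continuous_const.mul (Real.continuous_sin.comp (continuous_const.mul harc))))
  · exact continuous_const.mul (continuous_finset_sum _ fun k _ =>
      (continuous_const.mul (Real.continuous_cos.comp (continuous_const.mul harc))).div_const _)

private lemma auxF_deriv (n : ℕ) (hn : 1 ≤ n) {v : ℝ} (hv : v ∈ Set.Ioo (0:ℝ) 1) :
    HasDerivAt (auxF n) (π * n * (v * launchpadSpeedDensity n v)) v := by
  obtain ⟨hv0, hv1⟩ := hv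
  have h1v2 : (0:ℝ) < 1 - v^2 := by nlinarith
  set s : ℝ := Real.sqrt (1 - v^2) with hs_def
  have hs0 : 0 < s := Real.sqrt_pos.mpr h1v2
  have hs2 : s^2 = 1 - v^2 := Real.sq_sqrt h1v2.le
  -- the quotient form
  set Fq : ℝ → ℝ := fun v => Real.sin (2*n*Real.arcsin v)^2 / Real.sqrt (1 - v^2)
    - 4*n * ∑ k ∈ Finset.range (2*n), (-1:ℝ)^k * Real.cos ((2*k+1)*Real.arcsin v) / (2*k+1)
    with hFq_def
  have heq : auxF n =ᶠ[nhds v] Fq := by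
    have hmem : Set.Ioo (0:ℝ) 1 ∈ nhds v := isOpen_Ioo.mem_nhds ⟨hv0, hv1⟩
    filter_upwards [hmem] with x hx
    have h1x2 : (0:ℝ) < 1 - x^2 := by nlinarith [hx.1, hx.2]
    have hsx : Real.sqrt (1 - x^2) ≠ 0 := (Real.sqrt_pos.mpr h1x2).ne'
    have hcx : Real.cos (Real.arcsin x) = Real.sqrt (1 - x^2) := Real.cos_arcsin x
    unfold auxF
    rw [hFq_def]
    simp only
    rw [sq, sin_eq_cos_mul n (Real.arcsin x), hcx]
    generalize (∑ k ∈ Finset.range n, (-1:ℝ)^k * Real.sin ((2*k+1)*Real.arcsin x)) = P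
    generalize (∑ k ∈ Finset.range (2*n), (-1:ℝ)^k * Real.cos ((2*k+1)*Real.arcsin x) / (2*k+1)) = Q
    field_simp
  apply HasDerivAt.congr_of_eventuallyEq _ heq
  -- derivative of the quotient form
  have h_arc : HasDerivAt Real.arcsin (1/s) v := by
    simpa [hs_def] using Real.hasDerivAt_arcsin (by linarith : v ≠ -1) hv1.ne
  have h_inner : HasDerivAt (fun v => 2*(n:ℝ)*Real.arcsin v) (2*n*(1/s)) v := by
    simpa [mul_comm] using h_arc.const_mul (2*(n:ℝ))
  have h_sin : HasDerivAt (fun v => Real.sin (2*n*Real.arcsin v))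
      (Real.cos (2*n*Real.arcsin v) * (2*n*(1/s))) v :=
    (Real.hasDerivAt_sin _).comp v h_inner
  have h_sq : HasDerivAt (fun v => Real.sin (2*n*Real.arcsin v)^2)
      (2 * Real.sin (2*n*Real.arcsin v) * (Real.cos (2*n*Real.arcsin v) * (2*n*(1/s)))) v := by
    have := h_sin.pow 2
    norm_num at this
    refine this.congr_deriv ?_
    ring
  have h_poly : HasDerivAt (fun v : ℝ => 1 - v^2) (-(2*v)) v := by
    simpa using (hasDerivAt_pow 2 v).const_sub 1
  have h_sqrt : HasDerivAt (fun v : ℝ => Real.sqrt (1 - v^2)) (-v/s) v := by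
    have := (Real.hasDerivAt_sqrt h1v2.ne').comp v h_poly
    refine this.congr_deriv ?_
    rw [← hs_def]
    field_simp
  have h_div : HasDerivAt (fun v => Real.sin (2*n*Real.arcsin v)^2 / Real.sqrt (1 - v^2))
      ((2 * Real.sin (2*n*Real.arcsin v) * (Real.cos (2*n*Real.arcsin v) * (2*n*(1/s))) * s
        - Real.sin (2*n*Real.arcsin v)^2 * (-v/s)) / s^2) v := by
    exact h_sq.div h_sqrt hs0.ne'
  have h_term : ∀ k ∈ Finset.range (2*n), HasDerivAt
      (fun v => (-1:ℝ)^k * Real.cos ((2*k+1)*Real.arcsin v) / (2*k+1))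
      ((-1:ℝ)^k * (-Real.sin ((2*k+1)*Real.arcsin v) * ((2*k+1)*(1/s))) / (2*k+1)) v := by
    intro k _
    have hik : HasDerivAt (fun v => (2*(k:ℝ)+1)*Real.arcsin v) ((2*k+1)*(1/s)) v := by
      simpa [mul_comm] using h_arc.const_mul (2*(k:ℝ)+1)
    exact (((Real.hasDerivAt_cos _).comp v hik).const_mul _).div_const _
  have h_sum : HasDerivAt (fun v => ∑ k ∈ Finset.range (2*n),
      (-1:ℝ)^k * Real.cos ((2*k+1)*Real.arcsin v) / (2*k+1))
      (∑ k ∈ Finset.range (2*n),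
        (-1:ℝ)^k * (-Real.sin ((2*k+1)*Real.arcsin v) * ((2*k+1)*(1/s))) / (2*k+1)) v :=
    HasDerivAt.fun_sum h_term
  have h_F : HasDerivAt Fq
      ((2 * Real.sin (2*n*Real.arcsin v) * (Real.cos (2*n*Real.arcsin v) * (2*n*(1/s))) * s
        - Real.sin (2*n*Real.arcsin v)^2 * (-v/s)) / s^2
       - 4*n * ∑ k ∈ Finset.range (2*n),
        (-1:ℝ)^k * (-Real.sin ((2*k+1)*Real.arcsin v) * ((2*k+1)*(1/s))) / (2*k+1)) v :=
    h_div.sub (h_sum.const_mul _)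
  refine h_F.congr_deriv ?_
  -- now the algebraic identity
  set θ := Real.arcsin v with hθ
  have hcosθ : Real.cos θ = s := by rw [hθ, Real.cos_arcsin, ← hs_def]
  -- simplify the sum
  have hsum_simp : ∑ k ∈ Finset.range (2*n),
      (-1:ℝ)^k * (-Real.sin ((2*k+1)*θ) * ((2*k+1)*(1/s))) / (2*k+1)
      = -(1/s) * ∑ k ∈ Finset.range (2*n), (-1:ℝ)^k * Real.sin ((2*k+1)*θ) := by
    rw [Finset.mul_sum]
    refine Finset.sum_congr rfl fun k _ => ?_
    have hk : (2*(k:ℝ)+1) ≠ 0 := by positivity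
    field_simp
  have hkey : 2 * Real.cos θ * ∑ k ∈ Finset.range (2*n), (-1:ℝ)^k * Real.sin ((2*k+1)*θ)
      = - Real.sin (2*(2*n:ℕ)*θ) := by
    have h := sum_sin_key (2*n) θ
    have hsum : ∑ k ∈ Finset.range (2*n), (-1:ℝ)^k * (2 * Real.cos θ * Real.sin ((2*k+1)*θ))
        = 2 * Real.cos θ * ∑ k ∈ Finset.range (2*n), (-1:ℝ)^k * Real.sin ((2*k+1)*θ) := by
      rw [Finset.mul_sum]; exact Finset.sum_congr rfl fun k _ => by ring
    rw [hsum] at h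
    rw [h, pow_mul]
    norm_num
  have hdouble : Real.sin (2*(2*n:ℕ)*θ) = 2 * Real.sin (2*n*θ) * Real.cos (2*n*θ) := by
    push_cast
    rw [show (2:ℝ)*(2*(n:ℝ))*θ = 2*(2*(n:ℝ)*θ) by ring, Real.sin_two_mul]
  have hS : ∑ k ∈ Finset.range (2*n), (-1:ℝ)^k * Real.sin ((2*k+1)*θ)
      = -(Real.sin (2*n*θ) * Real.cos (2*n*θ))/s := by
    rw [hcosθ] at hkey
    rw [hdouble] at hkey
    rw [eq_div_iff hs0.ne']
    linear_combination hkey/2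
  rw [hsum_simp, hS]
  -- final algebra
  unfold launchpadSpeedDensity
  rw [rpow_three_halves h1v2.le, ← hs_def]
  have hπ : π ≠ 0 := Real.pi_ne_zero
  have hn' : (n:ℝ) ≠ 0 := by positivity
  field_simp
  ring

private lemma auxF_one (n : ℕ) : auxF n 1 = 0 := by
  unfold auxF
  rw [Real.arcsin_one]
  have h1 : Real.sin (2*(n:ℝ)*(π/2)) = 0 := by
    rw [show (2:ℝ)*(n:ℝ)*(π/2) = (n:ℝ)*π by ring]
    exact Real.sin_nat_mul_pi n
  have h2 : ∀ k : ℕ, Real.cos ((2*(k:ℝ)+1)*(π/2)) = 0 := by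
    intro k
    rw [show (2*(k:ℝ)+1)*(π/2) = (k:ℝ)*π + π/2 by ring, Real.cos_add_pi_div_two,
      Real.sin_nat_mul_pi, neg_zero]
  rw [h1]
  simp [h2]

private lemma auxF_zero (n : ℕ) :
    auxF n 0 = -(4*n * ∑ k ∈ Finset.range (2*n), (-1:ℝ)^k / (2*k+1)) := by
  unfold auxF
  rw [Real.arcsin_zero]
  simp

private lemma bound_aux (n : ℕ) (hn : 1 ≤ n) :
    ∀ x ∈ Set.Ioc (0:ℝ) 1,
      ‖π * n * (x * launchpadSpeedDensity n x)‖ ≤ 4*(n:ℝ)^2 * (1-x) ^ (-(1/2) : ℝ) := by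
  intro x hx
  obtain ⟨hx0, hx1⟩ := hx
  rcases eq_or_lt_of_le hx1 with h1 | h1
  · subst h1
    have h1 : Real.sin (2*(n:ℝ)*Real.arcsin 1) = 0 := by
      rw [Real.arcsin_one, show (2:ℝ)*(n:ℝ)*(π/2) = (n:ℝ)*π by ring]
      exact Real.sin_nat_mul_pi n
    unfold launchpadSpeedDensity
    rw [h1]
    norm_num
    try positivity
  · have h1x2 : (0:ℝ) < 1 - x^2 := by nlinarith
    set s : ℝ := Real.sqrt (1 - x^2) with hs_def
    have hs0 : 0 < s := Real.sqrt_pos.mpr h1x2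
    have hs2 : s^2 = 1 - x^2 := Real.sq_sqrt h1x2.le
    have hπ : (0:ℝ) < π := Real.pi_pos
    have hn' : (0:ℝ) < n := by positivity
    -- the value
    unfold launchpadSpeedDensity
    rw [rpow_three_halves h1x2.le, ← hs_def]
    have hval : π * n * (x * (Real.sin (2*n*Real.arcsin x)^2 / (π * n * s^3)))
        = x * Real.sin (2*n*Real.arcsin x)^2 / s^3 := by
      field_simp
    rw [hval]
    have hsin : Real.sin (2*n*Real.arcsin x)^2 ≤ (2*n)^2 * Real.cos (Real.arcsin x)^2 :=
      abs_sin_le_cos n _ (Real.cos_arcsin_nonneg x)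
    rw [Real.cos_arcsin, ← hs_def] at hsin
    have hnonneg : 0 ≤ x * Real.sin (2*n*Real.arcsin x)^2 / s^3 := by positivity
    rw [Real.norm_eq_abs, abs_of_nonneg hnonneg]
    have step1 : x * Real.sin (2*n*Real.arcsin x)^2 / s^3 ≤ 4*(n:ℝ)^2 / s := by
      rw [div_le_div_iff₀ (by positivity) hs0]
      calc x * Real.sin (2*n*Real.arcsin x)^2 * s ≤ 1 * ((2*n)^2 * s^2) * s := by
            apply mul_le_mul_of_nonneg_right _ hs0.le
            apply mul_le_mul hx1 hsin (by positivity) (by norm_num)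
        _ = 4*(n:ℝ)^2 * s^3 := by push_cast; ring
    refine step1.trans ?_
    -- 1/s ≤ (1-x)^(-1/2)
    have h1x : (0:ℝ) < 1 - x := by linarith
    have hle : Real.sqrt (1-x) ≤ s := by
      apply Real.sqrt_le_sqrt
      nlinarith
    have hrpow : (1-x) ^ (-(1/2) : ℝ) = 1 / Real.sqrt (1-x) := by
      rw [Real.rpow_neg h1x.le, Real.sqrt_eq_rpow, one_div]
      norm_num
    rw [hrpow, mul_one_div]
    rw [div_le_div_iff₀ hs0 (Real.sqrt_pos.mpr h1x), mul_comm]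
    nlinarith [hle, sq_nonneg ((n:ℝ))]

private lemma integrable_aux (n : ℕ) (hn : 1 ≤ n) :
    IntervalIntegrable (fun v => π * n * (v * launchpadSpeedDensity n v))
      MeasureTheory.volume 0 1 := by
  have hg : IntervalIntegrable (fun x : ℝ => 4*(n:ℝ)^2 * (1-x) ^ (-(1/2) : ℝ))
      MeasureTheory.volume 0 1 := by
    have h0 : IntervalIntegrable (fun x : ℝ => x ^ (-(1/2) : ℝ)) MeasureTheory.volume 0 1 :=
      intervalIntegral.intervalIntegrable_rpow' (by norm_num)
    have h1 := (h0.comp_sub_left 1).symm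
    norm_num at h1
    exact h1.const_mul _
  apply hg.mono_fun
  · apply Measurable.aestronglyMeasurable
    unfold launchpadSpeedDensity
    apply Measurable.mul measurable_const
    apply Measurable.mul measurable_id
    apply Measurable.div
    · exact ((Real.continuous_sin.comp (continuous_const.mul Real.continuous_arcsin)).pow 2).measurable
    · apply Measurable.mul measurable_const
      exact ((Real.continuous_rpow_const (by norm_num : (0:ℝ) ≤ 3/2)).comp
        (continuous_const.sub (continuous_pow 2))).measurable
  · rw [Set.uIoc_of_le (by norm_num : (0:ℝ) ≤ 1)]
    apply MeasureTheory.ae_restrict_of_forall_mem measurableSet_Ioc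
    intro x hx
    simp only [Real.norm_eq_abs]
    exact le_trans (bound_aux n hn x hx) (le_abs_self _)

/-- The expectation of the launch-pad time-of-flight speed:
`∫_0^1 v f_{V_n}(v) dv = (4/π) Σ_{h=1}^{n} (1/(4h−3) − 1/(4h−1))`. -/
theorem launchpadSpeedDensity_mean (n : ℕ) (hn : 1 ≤ n) :
    (∫ v in (0:ℝ)..1, v * launchpadSpeedDensity n v) =
      (4 / π) * ∑ h ∈ Finset.Icc 1 n, (1 / (4 * (h : ℝ) - 3) - 1 / (4 * (h : ℝ) - 1)) := by
  have hFTC := intervalIntegral.integral_eq_sub_of_hasDeriv_right_of_le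
    (by norm_num : (0:ℝ) ≤ 1)
    ((auxF_continuous n).continuousOn)
    (fun x hx => (auxF_deriv n hn hx).hasDerivWithinAt)
    (integrable_aux n hn)
  rw [auxF_one, auxF_zero, intervalIntegral.integral_const_mul] at hFTC
  set I := ∫ v in (0:ℝ)..1, v * launchpadSpeedDensity n v with hI
  set S := ∑ k ∈ Finset.range (2*n), (-1:ℝ)^k / (2*k+1) with hS
  rw [← sum_reindex n, ← hS]
  have hπ : π ≠ 0 := Real.pi_ne_zero
  have hn' : (n:ℝ) ≠ 0 := by positivity
  have h1 : π * ↑n * I = 4 * ↑n * S := by rw [hFTC]; ring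
  field_simp
  have h2 : (n:ℝ) * (I * π) = (n:ℝ) * (4 * S) := by linear_combination h1
  exact mul_left_cancel₀ hn' h2
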